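/- Consider the system on ℝ^8 (coordinates γ₁,…,γ₄,p₁,…,p₄): γ̇ᵢ = (ε²/τ)pᵢ for i=1,…,4; ṗ₁ = (κ₁₂/τ)p₂ + μγ₁, ṗ₂ = -(κ₁₂/τ)p₁ + μγ₂, ṗ₃ = (κ₃₄/τ)p₄ + μγ₃, ṗ₄ = -(κ₃₄/τ)p₃ + μγ₄, where μ = (1/τ)(κ₁₂(p₁γ₂ - p₂γ₁) + κ₃₄(p₃γ₄ - p₄γ₃)) - (ε²/τ)(p₁²+p₂²+p₃²+p₄²). Then Φ₁₂ = γ₁p₂ - γ₂p₁ + (κ₁₂/(2ε²))(γ₁²+γ₂²) and Φ₃₄ = γ₃p₄ - γ₄p₃ + (κ₃₄/(2ε²))(γ₃²+γ₄²) are first integrals along any solution. -/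

import Mathlib

lemma demchenko_pair (ε τ κ : ℝ) (hε : ε ≠ 0) (hτ : τ ≠ 0)
    (γ₁ γ₂ p₁ p₂ : ℝ → ℝ) (μ : ℝ → ℝ) (t : ℝ)
    (hγ₁ : HasDerivAt γ₁ ((ε^2 / τ) * p₁ t) t)
    (hγ₂ : HasDerivAt γ₂ ((ε^2 / τ) * p₂ t) t)
    (hp₁ : HasDerivAt p₁ ((κ / τ) * p₂ t + μ t * γ₁ t) t)
    (hp₂ : HasDerivAt p₂ (-(κ / τ) * p₁ t + μ t * γ₂ t) t) :
    HasDerivAt (fun s => γ₁ s * p₂ s - γ₂ s * p₁ s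
      + (κ / (2 * ε^2)) * (γ₁ s ^ 2 + γ₂ s ^ 2)) 0 t := by
  have h := ((hγ₁.mul hp₂).sub (hγ₂.mul hp₁)).add
    ((((hγ₁.pow 2).add (hγ₂.pow 2)).const_mul (κ / (2 * ε^2))))
  refine h.congr_deriv ?_
  field_simp
  ring

theorem demchenko4d_first_integrals
    (ε τ κ₁₂ κ₃₄ : ℝ) (hε : ε ≠ 0) (hτ : τ ≠ 0)
    (γ₁ γ₂ γ₃ γ₄ p₁ p₂ p₃ p₄ : ℝ → ℝ) (μ : ℝ → ℝ)
    (hμ : ∀ t, μ t = (1 / τ) * (κ₁₂ * (p₁ t * γ₂ t - p₂ t * γ₁ t)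
        + κ₃₄ * (p₃ t * γ₄ t - p₄ t * γ₃ t))
        - (ε^2 / τ) * (p₁ t ^ 2 + p₂ t ^ 2 + p₃ t ^ 2 + p₄ t ^ 2))
    (hγ₁ : ∀ t, HasDerivAt γ₁ ((ε^2 / τ) * p₁ t) t)
    (hγ₂ : ∀ t, HasDerivAt γ₂ ((ε^2 / τ) * p₂ t) t)
    (hγ₃ : ∀ t, HasDerivAt γ₃ ((ε^2 / τ) * p₃ t) t)
    (hγ₄ : ∀ t, HasDerivAt γ₄ ((ε^2 / τ) * p₄ t) t)
    (hp₁ : ∀ t, HasDerivAt p₁ ((κ₁₂ / τ) * p₂ t + μ t * γ₁ t) t)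
    (hp₂ : ∀ t, HasDerivAt p₂ (-(κ₁₂ / τ) * p₁ t + μ t * γ₂ t) t)
    (hp₃ : ∀ t, HasDerivAt p₃ ((κ₃₄ / τ) * p₄ t + μ t * γ₃ t) t)
    (hp₄ : ∀ t, HasDerivAt p₄ (-(κ₃₄ / τ) * p₃ t + μ t * γ₄ t) t) (t : ℝ) :
    HasDerivAt (fun s => γ₁ s * p₂ s - γ₂ s * p₁ s
      + (κ₁₂ / (2 * ε^2)) * (γ₁ s ^ 2 + γ₂ s ^ 2)) 0 t ∧
    HasDerivAt (fun s => γ₃ s * p₄ s - γ₄ s * p₃ s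
      + (κ₃₄ / (2 * ε^2)) * (γ₃ s ^ 2 + γ₄ s ^ 2)) 0 t := by
  exact ⟨demchenko_pair ε τ κ₁₂ hε hτ γ₁ γ₂ p₁ p₂ μ t (hγ₁ t) (hγ₂ t) (hp₁ t) (hp₂ t),
    demchenko_pair ε τ κ₃₄ hε hτ γ₃ γ₄ p₃ p₄ μ t (hγ₃ t) (hγ₄ t) (hp₃ t) (hp₄ t)⟩
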